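/- Let p be a prime and t a positive integer not divisible by p. If lim_{N→∞} (1/N) ∑_{t|n, n≤N} φ(n)/n = L, then lim_{N→∞} (1/N) ∑_{pt|n, n≤N} φ(n)/n = L/(p+1). -/

import Mathlib

open Filter Topology Finset

noncomputable def Sfun (t N : ℕ) : ℝ :=
  ∑ n ∈ (Finset.Icc 1 N).filter (fun n => t ∣ n), (Nat.totient n : ℝ) / n

lemma Sfun_nonneg (t N : ℕ) : 0 ≤ Sfun t N := by
  apply Finset.sum_nonneg; intro n _; positivity

lemma Sfun_le (t N : ℕ) : Sfun t N ≤ N := by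
  calc Sfun t N ≤ ∑ n ∈ (Finset.Icc 1 N).filter (fun n => t ∣ n), (1:ℝ) := by
        apply Finset.sum_le_sum
        intro n hn
        simp only [Finset.mem_filter, Finset.mem_Icc] at hn
        have hn0 : (0:ℝ) < n := by exact_mod_cast hn.1.1
        rw [div_le_one hn0]
        exact_mod_cast Nat.totient_le n
    _ = ((Finset.Icc 1 N).filter (fun n => t ∣ n)).card := by simp
    _ ≤ ((Finset.Icc 1 N).card : ℝ) := by
        exact_mod_cast Finset.card_le_card (Finset.filter_subset _ _)
    _ ≤ N := by simp [Nat.card_Icc]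

lemma Sfun_rec (p t : ℕ) (hp : p.Prime) (hpt : ¬ p ∣ t) (N : ℕ) :
    Sfun (p * t) N = (1 - 1/(p:ℝ)) * Sfun t (N / p) + (1/(p:ℝ)) * Sfun (p * t) (N / p) := by
  have hp0 : 0 < p := hp.pos
  have hre : Sfun (p * t) N =
      ∑ m ∈ (Finset.Icc 1 (N / p)).filter (fun m => t ∣ m),
        ((Nat.totient (p * m) : ℝ) / (p * m)) := by
    unfold Sfun
    rw [Finset.sum_nbij' (i := fun n => n / p) (j := fun m => p * m)]
    · intro n hn
      simp only [Finset.mem_filter, Finset.mem_Icc] at hn ⊢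
      obtain ⟨⟨h1, h2⟩, hd⟩ := hn
      have hpn : p ∣ n := (dvd_mul_right p t).trans hd
      refine ⟨⟨Nat.one_le_div_iff hp0 |>.2 (Nat.le_of_dvd (by omega) hpn), Nat.div_le_div_right h2⟩, ?_⟩
      obtain ⟨k, rfl⟩ := hd
      rw [mul_assoc, Nat.mul_div_cancel_left _ hp0]
      exact dvd_mul_right t k
    · intro m hm
      simp only [Finset.mem_filter, Finset.mem_Icc] at hm ⊢
      obtain ⟨⟨h1, h2⟩, hd⟩ := hm
      refine ⟨⟨Nat.mul_pos hp0 h1, ?_⟩, mul_dvd_mul_left p hd⟩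
      rw [mul_comm]
      exact (Nat.le_div_iff_mul_le hp0).1 h2
    · intro n hn
      simp only [Finset.mem_filter, Finset.mem_Icc] at hn
      have hpn : p ∣ n := (dvd_mul_right p t).trans hn.2
      exact Nat.mul_div_cancel' hpn
    · intro m _
      exact Nat.mul_div_cancel_left m hp0
    · intro n hn
      simp only [Finset.mem_filter, Finset.mem_Icc] at hn
      have hpn : p ∣ n := (dvd_mul_right p t).trans hn.2
      rw [← Nat.cast_mul, Nat.mul_div_cancel' hpn]
  rw [hre]
  have hsplit : ∀ m ∈ (Finset.Icc 1 (N / p)).filter (fun m => t ∣ m),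
      ((Nat.totient (p * m) : ℝ) / (p * m)) =
        (1 - 1/(p:ℝ)) * ((Nat.totient m : ℝ) / m) +
        (1/(p:ℝ)) * (if p ∣ m then ((Nat.totient m : ℝ) / m) else 0) := by
    intro m hm
    simp only [Finset.mem_filter, Finset.mem_Icc] at hm
    have hm0 : (0:ℝ) < m := by exact_mod_cast hm.1.1
    have hp0R : (0:ℝ) < p := by exact_mod_cast hp0
    by_cases h : p ∣ m
    · rw [if_pos h, Nat.totient_mul_of_prime_of_dvd hp h]
      push_cast
      field_simp
      ring
    · rw [if_neg h, Nat.totient_mul_of_prime_of_not_dvd hp h, Nat.cast_mul,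
        Nat.cast_pred hp0]
      field_simp
      ring
  have h2sum : ∑ m ∈ (Finset.Icc 1 (N / p)).filter (fun m => t ∣ m),
      (if p ∣ m then ((Nat.totient m : ℝ) / m) else 0) = Sfun (p * t) (N / p) := by
    rw [← Finset.sum_filter, Finset.filter_filter]
    unfold Sfun
    congr 1
    apply Finset.filter_congr
    intro n _
    have cop : Nat.Coprime p t := (Nat.Prime.coprime_iff_not_dvd hp).2 hpt
    constructor
    · rintro ⟨h1, h2⟩
      exact Nat.Coprime.mul_dvd_of_dvd_of_dvd cop h2 h1
    · intro h
      exact ⟨(dvd_mul_left t p).trans h, (dvd_mul_right p t).trans h⟩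
  rw [Finset.sum_congr rfl hsplit, Finset.sum_add_distrib, ← Finset.mul_sum, ← Finset.mul_sum,
    h2sum]
  rfl

lemma Sfun_iter (p t : ℕ) (hp : p.Prime) (hpt : ¬ p ∣ t) (N K : ℕ) :
    Sfun (p * t) N = (1 - 1/(p:ℝ)) *
      (∑ k ∈ Finset.range K, (1/(p:ℝ))^k * Sfun t (N / p^(k+1)))
      + (1/(p:ℝ))^K * Sfun (p * t) (N / p^K) := by
  induction K with
  | zero => simp
  | succ K ih =>
    rw [ih, Finset.sum_range_succ, Sfun_rec p t hp hpt (N / p^K)]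
    have hdiv : ∀ j : ℕ, N / p^K / p^j = N / p^(K + j) := by
      intro j
      rw [Nat.div_div_eq_div_mul, ← pow_add]
    have h1 : N / p^K / p = N / p^(K+1) := by
      rw [Nat.div_div_eq_div_mul, ← pow_succ]
    rw [h1]
    ring

lemma tendsto_nat_div_cast (m : ℕ) (hm : 0 < m) :
    Tendsto (fun N : ℕ => ((N / m : ℕ) : ℝ) / N) atTop (𝓝 (1 / m)) := by
  have hmR : (0:ℝ) < m := by exact_mod_cast hm
  apply tendsto_of_tendsto_of_tendsto_of_le_of_le'
    (g := fun N : ℕ => 1 / (m:ℝ) - 1 / N) (h := fun _ : ℕ => 1 / (m:ℝ))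
  · have : Tendsto (fun N : ℕ => 1 / (N:ℝ)) atTop (𝓝 0) :=
      tendsto_one_div_atTop_nhds_zero_nat
    simpa using (tendsto_const_nhds (x := 1 / (m:ℝ))).sub this
  · exact tendsto_const_nhds
  · filter_upwards [eventually_ge_atTop 1] with N hN
    have hN0 : (0:ℝ) < N := by exact_mod_cast hN
    have key : (N:ℝ) / m - 1 ≤ ((N / m : ℕ) : ℝ) := by
      have h1 : m * (N / m) + N % m = N := Nat.div_add_mod N m
      have h2 : N % m < m := Nat.mod_lt _ hm
      have h1R : (m:ℝ) * ((N / m : ℕ) : ℝ) + ((N % m : ℕ) : ℝ) = N := by exact_mod_cast h1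
      have h2R : ((N % m : ℕ) : ℝ) < m := by exact_mod_cast h2
      rw [div_sub_one (ne_of_gt hmR), div_le_iff₀ hmR]
      nlinarith
    have : 1 / (m:ℝ) - 1 / N = ((N:ℝ) / m - 1) / N := by
      field_simp
    rw [this]
    exact div_le_div_of_nonneg_right key hN0.le |>.trans_eq rfl
  · filter_upwards [eventually_ge_atTop 1] with N hN
    have hN0 : (0:ℝ) < N := by exact_mod_cast hN
    have key : ((N / m : ℕ) : ℝ) ≤ (N:ℝ) / m := by
      rw [le_div_iff₀ hmR]
      exact_mod_cast Nat.div_mul_le_self N m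
    calc ((N / m : ℕ) : ℝ) / N ≤ ((N:ℝ) / m) / N := by
          exact div_le_div_of_nonneg_right key hN0.le |>.trans_eq rfl
      _ = 1 / m := by field_simp

lemma Sfun_div_tendsto (t : ℕ) (L : ℝ)
    (hL : Tendsto (fun N : ℕ => Sfun t N / N) atTop (𝓝 L)) (m : ℕ) (hm : 0 < m) :
    Tendsto (fun N : ℕ => Sfun t (N / m) / N) atTop (𝓝 (L / m)) := by
  have hdiv : Tendsto (fun N : ℕ => N / m) atTop atTop :=
    le_of_eq (Filter.map_div_atTop_eq_nat m hm)
  have h1 : Tendsto (fun N : ℕ => Sfun t (N / m) / ((N / m : ℕ) : ℝ)) atTop (𝓝 L) :=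
    hL.comp hdiv
  have h2 := tendsto_nat_div_cast m hm
  have h3 := h1.mul h2
  rw [mul_one_div] at h3
  apply h3.congr'
  filter_upwards [eventually_ge_atTop m] with N hN
  have hd1 : 1 ≤ N / m := (Nat.one_le_div_iff hm).2 hN
  have hd0 : ((N / m : ℕ) : ℝ) ≠ 0 := by
    have : (0:ℕ) < N / m := hd1
    exact_mod_cast this.ne'
  field_simp

theorem stmt11 (p t : ℕ) (hp : p.Prime) (ht : 0 < t) (hpt : ¬ p ∣ t) (L : ℝ)
    (hL : Tendsto (fun N : ℕ =>
      (∑ n ∈ (Finset.Icc 1 N).filter (fun n => t ∣ n), (Nat.totient n : ℝ) / n) / N)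
      atTop (𝓝 L)) :
    Tendsto (fun N : ℕ =>
      (∑ n ∈ (Finset.Icc 1 N).filter (fun n => p * t ∣ n), (Nat.totient n : ℝ) / n) / N)
      atTop (𝓝 (L / (p + 1))) := by
  have hL' : Tendsto (fun N : ℕ => Sfun t N / N) atTop (𝓝 L) := hL
  show Tendsto (fun N : ℕ => Sfun (p * t) N / N) atTop (𝓝 (L / (p + 1)))
  have hp0 : 0 < p := hp.pos
  have hp1 : 2 ≤ p := hp.two_le
  have hpR : (2:ℝ) ≤ p := by exact_mod_cast hp1
  set q : ℝ := 1 / (p:ℝ) with hq_def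
  have hq0 : 0 < q := by positivity
  have hq1 : q < 1 := by
    rw [hq_def, div_lt_one (by linarith)]; linarith
  set r : ℝ := q ^ 2 with hr_def
  have hr0 : 0 ≤ r := by positivity
  have hr1 : r < 1 := by
    calc r = q * q := sq q
      _ < 1 * 1 := by apply mul_lt_mul' hq1.le hq1 hq0.le; linarith
      _ = 1 := by ring
  rw [Metric.tendsto_atTop]
  intro ε hε
  -- choose K
  have hpow : Tendsto (fun K : ℕ => r ^ K * (1 + |L|)) atTop (𝓝 0) := by
    simpa using (tendsto_pow_atTop_nhds_zero_of_lt_one hr0 hr1).mul_const (1 + |L|)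
  obtain ⟨K, hK⟩ := (hpow.eventually_lt_const (half_pos hε)).exists
  -- the truncated limit
  set cK : ℝ := (1 - q) * ∑ k ∈ Finset.range K, q ^ k * (L / ((p ^ (k+1) : ℕ) : ℝ)) with hcK_def
  have hgK : Tendsto (fun N : ℕ =>
      (1 - q) * ∑ k ∈ Finset.range K, q ^ k * (Sfun t (N / p ^ (k+1)) / N)) atTop (𝓝 cK) := by
    apply Tendsto.const_mul
    apply tendsto_finset_sum
    intro k _
    exact (Sfun_div_tendsto t L hL' (p ^ (k+1)) (pow_pos hp0 _)).const_mul (q ^ k)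
  have hcK_val : cK = L / (p + 1) - L / (p + 1) * r ^ K := by
    have hterm : ∀ k ∈ Finset.range K,
        q ^ k * (L / ((p ^ (k+1) : ℕ) : ℝ)) = (L * q) * r ^ k := by
      intro k _
      have hpne : ((p:ℝ)) ≠ 0 := by positivity
      rw [Nat.cast_pow]
      have h1 : (1:ℝ)/(p:ℝ)^(k+1) = q^(k+1) := by rw [hq_def, one_div_pow]
      have h2 : q^k * q^(k+1) = q * (q^2)^k := by
        rw [← pow_mul, ← pow_succ', ← pow_add]
        congr 1
        omega
      calc q^k * (L / (p:ℝ)^(k+1)) = L * (q^k * q^(k+1)) := by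
            rw [div_eq_mul_one_div L, h1]; ring
        _ = L * q * r^k := by rw [h2, hr_def]; ring
    rw [hcK_def, Finset.sum_congr rfl hterm, ← Finset.mul_sum, geom_sum_eq hr1.ne]
    have hp1R : (p:ℝ) + 1 ≠ 0 := by positivity
    have hpne : ((p:ℝ)) ≠ 0 := by positivity
    have hrne : r - 1 ≠ 0 := sub_ne_zero.2 hr1.ne
    obtain ⟨v, hv⟩ : ∃ v, r ^ K = v := ⟨_, rfl⟩
    rw [hv]
    have hq1ne : q + 1 ≠ 0 := by positivity
    have hrne' : q^2 - 1 ≠ 0 := by rw [← hr_def]; exact hrne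
    have key : (1 - q) * (L * q * ((v - 1) / (r - 1))) = L * q / (q + 1) * (1 - v) := by
      rw [hr_def]
      field_simp
      ring
    have key2 : L * q / (q + 1) = L / ((p:ℝ) + 1) := by
      rw [hq_def, div_eq_div_iff (by positivity) hp1R]
      field_simp
      ring
    rw [key, key2]
    ring
  obtain ⟨N₁, hN₁⟩ := Metric.tendsto_atTop.1 hgK (ε/2) (half_pos hε)
  refine ⟨max N₁ 1, fun N hN => ?_⟩
  have hNN₁ : N ≥ N₁ := le_trans (le_max_left _ _) hN
  have hN1 : 1 ≤ N := le_trans (le_max_right _ _) hN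
  have hN0R : (0:ℝ) < N := by exact_mod_cast hN1
  -- decomposition
  set gN : ℝ := (1 - q) * ∑ k ∈ Finset.range K, q ^ k * (Sfun t (N / p ^ (k+1)) / N) with hgN_def
  set e : ℝ := q ^ K * (Sfun (p * t) (N / p ^ K) / N) with he_def
  have hdecomp : Sfun (p * t) N / N = gN + e := by
    rw [Sfun_iter p t hp hpt N K, add_div, mul_div_assoc, mul_div_assoc, Finset.sum_div,
      hgN_def, he_def]
    congr 1
    congr 1
    apply Finset.sum_congr rfl
    intro k _
    rw [mul_div_assoc]
  -- bound on e
  have he_bound : |e| ≤ r ^ K := by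
    have h1 : 0 ≤ Sfun (p * t) (N / p ^ K) := Sfun_nonneg _ _
    have h2 : Sfun (p * t) (N / p ^ K) ≤ ((N / p ^ K : ℕ) : ℝ) := Sfun_le _ _
    have h3 : ((N / p ^ K : ℕ) : ℝ) ≤ (N:ℝ) / (p:ℝ) ^ K := by
      rw [le_div_iff₀ (by positivity)]
      exact_mod_cast Nat.div_mul_le_self N (p ^ K)
    have hqK : (0:ℝ) < q ^ K := pow_pos hq0 _
    have hePos : 0 ≤ e := by
      rw [he_def]; positivity
    rw [abs_of_nonneg hePos, he_def]
    have : Sfun (p * t) (N / p ^ K) / N ≤ q ^ K := by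
      rw [div_le_iff₀ hN0R]
      calc Sfun (p * t) (N / p ^ K) ≤ (N:ℝ) / (p:ℝ) ^ K := h2.trans h3
        _ = q ^ K * N := by rw [hq_def, div_pow, one_pow]; ring
    calc q ^ K * (Sfun (p * t) (N / p ^ K) / N) ≤ q ^ K * q ^ K :=
          mul_le_mul_of_nonneg_left this hqK.le
      _ = r ^ K := by rw [hr_def, ← pow_mul, two_mul, pow_add]
  -- conclude
  have hKe : r ^ K * (1 + |L|) < ε / 2 := hK
  have hgNd : |gN - cK| < ε / 2 := by
    have := hN₁ N hNN₁
    rwa [Real.dist_eq] at this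
  rw [Real.dist_eq, hdecomp]
  have hcd : |cK - L / (p + 1)| ≤ |L| * r ^ K := by
    rw [hcK_val]
    have : L / (p + 1) - L / (p + 1) * r ^ K - L / (p + 1) = -(L / (p + 1) * r ^ K) := by ring
    rw [this, abs_neg, abs_mul, abs_div]
    have h1 : |(p:ℝ) + 1| = (p:ℝ) + 1 := abs_of_pos (by positivity)
    rw [h1, abs_pow, abs_of_nonneg hr0]
    have : |L| / ((p:ℝ) + 1) ≤ |L| := by
      apply div_le_self (abs_nonneg L); linarith
    exact mul_le_mul_of_nonneg_right this (by positivity)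
  calc |gN + e - L / (p + 1)| = |(gN - cK) + e + (cK - L / (p + 1))| := by
        congr 1; ring
    _ ≤ |gN - cK| + |e| + |cK - L / (p + 1)| := by
        exact (abs_add_le _ _).trans (add_le_add_left (abs_add_le _ _) _)
    _ ≤ |gN - cK| + r ^ K + |L| * r ^ K := by linarith [he_bound, hcd]
    _ < ε / 2 + r ^ K + |L| * r ^ K := by linarith [hgNd]
    _ ≤ ε / 2 + ε / 2 := by nlinarith [hKe]
    _ = ε := by ring
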